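/- arXiv:2103.01338 — 7 statements merged into one kernel-verified Lean document; each statement's English description precedes it below -/
import Mathlib

section
/- For all δ ≥ 0 and nonnegative integers n, T_n(1+δ) ≥ (1 + sqrt(2δ))^n / 2. -/
open Real

/-- `cheb n x` is the value at `x` of the `n`-th Chebyshev polynomial of the first kind. -/
noncomputable def cheb (n : ℕ) (x : ℝ) : ℝ := (Polynomial.Chebyshev.T ℝ n).eval x

lemma cheb_eval_avg (u : ℝ) (hu : u ≠ 0) :
    ∀ n : ℕ, (Polynomial.Chebyshev.T ℝ n).eval ((u + u⁻¹) / 2) = (u ^ n + u⁻¹ ^ n) / 2 := by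
  intro n
  induction n using Nat.twoStepInduction with
  | zero => simp [Polynomial.Chebyshev.T_zero]
  | one => simp [Polynomial.Chebyshev.T_one]
  | more n ih1 ih2 =>
    rw [show ((n + 2 : ℕ) : ℤ) = (n : ℤ) + 2 by push_cast; ring,
      Polynomial.Chebyshev.T_add_two]
    simp only [Polynomial.eval_sub, Polynomial.eval_mul, Polynomial.eval_ofNat,
      Polynomial.eval_X]
    rw [show ((n : ℤ) + 1) = ((n + 1 : ℕ) : ℤ) by push_cast; ring, ih1, ih2]
    field_simp
    linear_combination (u * u⁻¹ ^ n - u⁻¹ * u⁻¹ ^ n) * mul_inv_cancel₀ hu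

theorem cheb_one_add_ge (δ : ℝ) (hδ : 0 ≤ δ) (n : ℕ) :
    cheb n (1 + δ) ≥ (1 + Real.sqrt (2 * δ)) ^ n / 2 := by
  set u : ℝ := 1 + δ + Real.sqrt (δ ^ 2 + 2 * δ) with hu_def
  have hs : 0 ≤ Real.sqrt (δ ^ 2 + 2 * δ) := Real.sqrt_nonneg _
  have hu_pos : 0 < u := by positivity
  have hu_ne : u ≠ 0 := ne_of_gt hu_pos
  have hsq : Real.sqrt (δ ^ 2 + 2 * δ) ^ 2 = δ ^ 2 + 2 * δ :=
    Real.sq_sqrt (by positivity)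
  have hinv : u⁻¹ = 1 + δ - Real.sqrt (δ ^ 2 + 2 * δ) := by
    have : u * (1 + δ - Real.sqrt (δ ^ 2 + 2 * δ)) = 1 := by
      rw [hu_def]; nlinarith [hsq]
    exact inv_eq_of_mul_eq_one_right this
  have havg : (u + u⁻¹) / 2 = 1 + δ := by
    rw [hinv]; ring
  have key : cheb n (1 + δ) = (u ^ n + u⁻¹ ^ n) / 2 := by
    rw [cheb, ← havg, cheb_eval_avg u hu_ne]
  rw [key]
  have h1 : (1 + Real.sqrt (2 * δ)) ≤ u := by
    have : Real.sqrt (2 * δ) ≤ Real.sqrt (δ ^ 2 + 2 * δ) := by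
      apply Real.sqrt_le_sqrt; nlinarith
    simp only [hu_def]; linarith
  have h2 : (1 + Real.sqrt (2 * δ)) ^ n ≤ u ^ n :=
    pow_le_pow_left₀ (by positivity) h1 n
  have h3 : 0 ≤ u⁻¹ ^ n := by positivity
  linarith
end

section
/- Let θ > 1, α ∈ (0, π), and let n be a positive even integer. Then for all real z, (T_n(z) - cos α)/(T_n(θ) - cos α) = [(T_{n/2}(z) - cos(α/2))/(T_{n/2}(θ) - cos(α/2))] · [(T_{n/2}(z) + cos(α/2))/(T_{n/2}(θ) + cos(α/2))]; that is, the skewed Chebyshev polynomial P_{n,α} factors as P_{n/2, α/2} · P_{n/2, π - α/2}. -/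
open Real

lemma cheb_two_mul (m : ℕ) (x : ℝ) : cheb (2 * m) x = 2 * (cheb m x) ^ 2 - 1 := by
  unfold cheb
  push_cast
  rw [Polynomial.Chebyshev.T_mul, Polynomial.eval_comp, Polynomial.Chebyshev.T_two]
  simp

lemma cheb_rec (k : ℕ) (x : ℝ) : cheb (k + 2) x = 2 * x * cheb (k + 1) x - cheb k x := by
  unfold cheb
  push_cast
  rw [Polynomial.Chebyshev.T_add_two]
  simp

lemma one_lt_cheb {θ : ℝ} (hθ : 1 < θ) {m : ℕ} (hm : 0 < m) : 1 < cheb m θ := by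
  have key : ∀ k : ℕ, 1 < cheb (k + 1) θ ∧ cheb (k + 1) θ ≤ cheb (k + 2) θ := by
    intro k
    induction k with
    | zero =>
      have h1 : cheb 1 θ = θ := by unfold cheb; simp [Polynomial.Chebyshev.T_one]
      have h0 : cheb 0 θ = 1 := by unfold cheb; simp [Polynomial.Chebyshev.T_zero]
      have h2 := cheb_rec 0 θ
      constructor
      · rw [h1]; exact hθ
      · rw [h2, h0, h1]; nlinarith
    | succ k ih =>
      obtain ⟨h1, h2⟩ := ih
      have hrec := cheb_rec (k + 1) θ
      constructor
      · linarith
      · rw [hrec]; nlinarith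
  obtain ⟨k, rfl⟩ := Nat.exists_eq_add_of_lt hm
  simpa [Nat.add_comm] using (key k).1

theorem skewed_cheb_split (θ : ℝ) (hθ : 1 < θ) (α : ℝ) (hα : α ∈ Set.Ioo 0 π)
    (n : ℕ) (hn : 0 < n) (hev : Even n) (z : ℝ) :
    (cheb n z - Real.cos α) / (cheb n θ - Real.cos α) =
      ((cheb (n / 2) z - Real.cos (α / 2)) / (cheb (n / 2) θ - Real.cos (α / 2))) *
        ((cheb (n / 2) z + Real.cos (α / 2)) / (cheb (n / 2) θ + Real.cos (α / 2))) := by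
  obtain ⟨m, rfl⟩ := hev
  have hm : 0 < m := by omega
  have hmm : m + m = 2 * m := by ring
  have hdiv : (m + m) / 2 = m := by omega
  rw [hdiv, hmm]
  set c := Real.cos (α / 2) with hc
  have hcsq : 2 * c ^ 2 - 1 = Real.cos α := by
    rw [hc, Real.cos_sq (α/2)]; ring_nf
  have hc1 : c < 1 := by
    rw [hc]
    calc Real.cos (α / 2) < Real.cos 0 :=
          Real.cos_lt_cos_of_nonneg_of_le_pi le_rfl
            (by linarith [hα.2, Real.pi_pos]) (by linarith [hα.1])
      _ = 1 := Real.cos_zero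
  have hc0 : 0 < c := by
    rw [hc]
    apply Real.cos_pos_of_mem_Ioo
    constructor
    · linarith [hα.1, Real.pi_pos]
    · linarith [hα.2]
  have hT : 1 < cheb m θ := one_lt_cheb hθ hm
  have hnum : cheb (2 * m) z - Real.cos α = 2 * ((cheb m z - c) * (cheb m z + c)) := by
    rw [cheb_two_mul, ← hcsq]; ring
  have hden : cheb (2 * m) θ - Real.cos α = 2 * ((cheb m θ - c) * (cheb m θ + c)) := by
    rw [cheb_two_mul, ← hcsq]; ring
  rw [hnum, hden, div_mul_div_comm,
    mul_div_mul_left _ _ (by norm_num : (2:ℝ) ≠ 0)]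
end

section
/- For all α ∈ (0, π/2) and all integers n ≥ 2, sin(α/2)·sin((π-α)/(2n))·cos(α/(2n)) ≥ cos(α/2)·cos((π-α)/(2n))·sin(α/(2n)); equivalently, tan²(α/2)·tan²((π-α)/(2n)) ≥ tan²(α/(2n)). -/
open Real

private lemma cos_pos_aux {x : ℝ} (h0 : 0 ≤ x) (h2 : x < π / 2) : 0 < Real.cos x :=
  Real.cos_pos_of_mem_Ioo ⟨by linarith [Real.pi_pos], h2⟩

private lemma tan_convexOn : ConvexOn ℝ (Set.Ico 0 (π / 2)) Real.tan := by
  have hint : interior (Set.Ico (0:ℝ) (π/2)) = Set.Ioo 0 (π/2) := interior_Ico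
  apply convexOn_of_hasDerivWithinAt2_nonneg (f' := fun x => 1 / Real.cos x ^ 2)
    (f'' := fun x => 2 * Real.sin x / Real.cos x ^ 3) (convex_Ico _ _)
  · exact Real.continuousOn_tan.mono fun x hx => (cos_pos_aux hx.1 hx.2).ne'
  · intro x hx
    rw [hint] at hx
    exact (Real.hasDerivAt_tan (cos_pos_aux hx.1.le hx.2).ne').hasDerivWithinAt
  · intro x hx
    rw [hint] at hx
    have hc : 0 < Real.cos x := cos_pos_aux hx.1.le hx.2
    have h1 : HasDerivAt (fun x => Real.cos x ^ 2)
        ((2:ℕ) * Real.cos x ^ (2-1) * (-Real.sin x)) x := (Real.hasDerivAt_cos x).pow 2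
    have h2 := h1.inv (by positivity)
    have h3 : HasDerivAt (fun x => 1 / Real.cos x ^ 2) (2 * Real.sin x / Real.cos x ^ 3) x := by
      simp only [one_div]
      refine h2.congr_deriv ?_
      have := hc.ne'
      field_simp
      ring
    exact h3.hasDerivWithinAt
  · intro x hx
    rw [hint] at hx
    have hc : 0 < Real.cos x := cos_pos_aux hx.1.le hx.2
    have hs : 0 ≤ Real.sin x := Real.sin_nonneg_of_nonneg_of_le_pi hx.1.le
      (by linarith [Real.pi_pos, hx.2])
    positivity

/-- `tan c / c ≤ tan b / b` in product form. -/
private lemma tan_mul_le {b c : ℝ} (hc : 0 ≤ c) (hcb : c ≤ b) (hb : b < π / 2) :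
    Real.tan c * b ≤ Real.tan b * c := by
  rcases eq_or_lt_of_le (hc.trans hcb) with hb0 | hb0
  · have : c = 0 := le_antisymm (hcb.trans hb0.ge) hc
    simp [this, ← hb0]
  have hmem0 : (0:ℝ) ∈ Set.Ico 0 (π/2) := ⟨le_refl _, by linarith [Real.pi_pos]⟩
  have hmemb : b ∈ Set.Ico 0 (π/2) := ⟨hb0.le, hb⟩
  have hl1 : 0 ≤ 1 - c / b := by
    have : c / b ≤ 1 := (div_le_one hb0).2 hcb
    linarith
  have hl2 : 0 ≤ c / b := div_nonneg hc hb0.le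
  have h := tan_convexOn.2 hmem0 hmemb hl1 hl2 (by ring)
  have hxb : (1 - c / b) • (0:ℝ) + (c / b) • b = c := by
    field_simp
    rw [smul_eq_mul, smul_eq_mul, mul_zero, zero_add, div_mul_cancel₀ c hb0.ne']
  rw [hxb] at h
  simp only [smul_eq_mul, Real.tan_zero, mul_zero, zero_add] at h
  have h2 := mul_le_mul_of_nonneg_right h hb0.le
  calc Real.tan c * b ≤ c / b * Real.tan b * b := h2
    _ = Real.tan b * c := by field_simp

/-- Key concavity lemma: `tan x * (π/2 - x) ≥ x` on `[0, π/4]`. -/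
private lemma tan_key {x : ℝ} (hx : x ∈ Set.Icc 0 (π / 4)) :
    x ≤ Real.tan x * (π / 2 - x) := by
  have hpi := Real.pi_pos
  set f : ℝ → ℝ := fun x => Real.tan x * (π / 2 - x) - x with hf
  have hsub : Set.Icc (0:ℝ) (π/4) ⊆ Set.Ico 0 (π/2) := fun y hy =>
    ⟨hy.1, by linarith [hy.2]⟩
  have hconc : ConcaveOn ℝ (Set.Icc 0 (π / 4)) f := by
    have hint : interior (Set.Icc (0:ℝ) (π/4)) = Set.Ioo 0 (π/4) := interior_Icc
    apply concaveOn_of_hasDerivWithinAt2_nonpos (convex_Icc _ _)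
      (f' := fun x => (π / 2 - x) / Real.cos x ^ 2 - Real.tan x - 1)
      (f'' := fun x => (π / 2 - x) * (2 * Real.sin x) / Real.cos x ^ 3 - 2 / Real.cos x ^ 2)
    · apply ContinuousOn.sub
      · exact (Real.continuousOn_tan.mono fun y hy =>
          (cos_pos_aux (hsub hy).1 (hsub hy).2).ne').mul
          ((continuous_const.sub continuous_id).continuousOn)
      · exact continuous_id.continuousOn
    · intro x hx
      rw [hint] at hx
      have hc : Real.cos x ≠ 0 := (cos_pos_aux hx.1.le (by linarith [hx.2])).ne'
      have h1 : HasDerivAt f (1 / Real.cos x ^ 2 * (π / 2 - x) + Real.tan x * (0 - 1) - 1) x :=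
        ((Real.hasDerivAt_tan hc).mul ((hasDerivAt_const x (π/2)).sub (hasDerivAt_id x))).sub
          (hasDerivAt_id x)
      have h2 : 1 / Real.cos x ^ 2 * (π / 2 - x) + Real.tan x * (0 - 1) - 1
          = (π / 2 - x) / Real.cos x ^ 2 - Real.tan x - 1 := by ring
      rw [h2] at h1
      exact h1.hasDerivWithinAt
    · intro x hx
      rw [hint] at hx
      have hcpos : 0 < Real.cos x := cos_pos_aux hx.1.le (by linarith [hx.2])
      have hc : Real.cos x ≠ 0 := hcpos.ne'
      have hp1 : HasDerivAt (fun x => Real.cos x ^ 2)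
          ((2:ℕ) * Real.cos x ^ (2-1) * (-Real.sin x)) x := (Real.hasDerivAt_cos x).pow 2
      have hp2 := hp1.inv (by positivity)
      have hmain : HasDerivAt
          (fun y => (π / 2 - y) * (Real.cos y ^ 2)⁻¹ - Real.tan y - 1)
          ((0 - 1) * (Real.cos x ^ 2)⁻¹ +
            (π / 2 - x) * (-((2:ℕ) * Real.cos x ^ (2-1) * (-Real.sin x)) / (Real.cos x ^ 2) ^ 2)
            - 1 / Real.cos x ^ 2) x := by
        have h := (((hasDerivAt_const x (π/2)).sub (hasDerivAt_id x)).mul hp2).sub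
          (Real.hasDerivAt_tan hc)
        have h' := h.sub (hasDerivAt_const x (1:ℝ))
        exact h'.congr_deriv (by simp)
      have hfun : (fun y => (π / 2 - y) * (Real.cos y ^ 2)⁻¹ - Real.tan y - 1)
          = fun y => (π / 2 - y) / Real.cos y ^ 2 - Real.tan y - 1 := by
        funext y; ring
      rw [hfun] at hmain
      have heq : ((0:ℝ) - 1) * (Real.cos x ^ 2)⁻¹ +
            (π / 2 - x) * (-((2:ℕ) * Real.cos x ^ (2-1) * (-Real.sin x)) / (Real.cos x ^ 2) ^ 2)
            - 1 / Real.cos x ^ 2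
          = (π / 2 - x) * (2 * Real.sin x) / Real.cos x ^ 3 - 2 / Real.cos x ^ 2 := by
        field_simp
        ring
      rw [heq] at hmain
      exact hmain.hasDerivWithinAt
    · intro x hx
      rw [hint] at hx
      have hcpos : 0 < Real.cos x := cos_pos_aux hx.1.le (by linarith [hx.2])
      have ht0 : 0 < π / 2 - x := by linarith [hx.2]
      have ht2 : π / 2 - x < π / 2 := by linarith [hx.1]
      have htan := Real.lt_tan ht0 ht2
      rw [Real.tan_eq_sin_div_cos, Real.sin_pi_div_two_sub, Real.cos_pi_div_two_sub] at htan
      have hsinx : 0 < Real.sin x := Real.sin_pos_of_pos_of_lt_pi hx.1 (by linarith)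
      have hkey : (π / 2 - x) * Real.sin x < Real.cos x := (lt_div_iff₀ hsinx).mp htan
      have hdivle : (π / 2 - x) * (2 * Real.sin x) / Real.cos x ^ 3 ≤ 2 / Real.cos x ^ 2 := by
        rw [div_le_div_iff₀ (by positivity) (by positivity)]
        nlinarith [mul_le_mul_of_nonneg_right hkey.le
          (by positivity : (0:ℝ) ≤ 2 * Real.cos x ^ 2)]
      linarith
  have h0mem : (0:ℝ) ∈ Set.Icc 0 (π/4) := ⟨le_refl _, by positivity⟩
  have h4mem : π/4 ∈ Set.Icc (0:ℝ) (π/4) := ⟨by positivity, le_refl _⟩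
  have hseg : x ∈ segment ℝ (0:ℝ) (π/4) := by
    rw [segment_eq_Icc (by positivity)]
    exact hx
  obtain ⟨u, v, hu, hv, huv, hxeq⟩ := hseg
  have hmin := hconc.2 h0mem h4mem hu hv huv
  rw [hxeq] at hmin
  have h0 : f 0 = 0 := by simp [hf]
  have h4 : f (π/4) = 0 := by
    simp only [hf, Real.tan_pi_div_four]
    ring
  rw [h0, h4, smul_zero, smul_zero, add_zero] at hmin
  simp only [hf] at hmin
  linarith

theorem trig_exchange_ineq (α : ℝ) (hα : α ∈ Set.Ioo 0 (π / 2)) (n : ℕ) (hn : 2 ≤ n) :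
    Real.sin (α / 2) * Real.sin ((π - α) / (2 * n)) * Real.cos (α / (2 * n)) ≥
      Real.cos (α / 2) * Real.cos ((π - α) / (2 * n)) * Real.sin (α / (2 * n)) ∧
    Real.tan (α / 2) ^ 2 * Real.tan ((π - α) / (2 * n)) ^ 2 ≥ Real.tan (α / (2 * n)) ^ 2 := by
  obtain ⟨hα0, hα2⟩ := hα
  have hpi := Real.pi_pos
  have hN : (2:ℝ) ≤ (n:ℝ) := by exact_mod_cast hn
  have hNpos : (0:ℝ) < (n:ℝ) := by linarith
  set a := α / 2 with ha
  set b := (π - α) / (2 * (n:ℝ)) with hb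
  set c := α / (2 * (n:ℝ)) with hc
  have hapos : 0 < a := by positivity
  have ha4 : a < π / 4 := by rw [ha]; linarith
  have hbpos : 0 < b := by
    apply div_pos (by linarith) (by linarith)
  have hcpos : 0 < c := by positivity
  have hcb : c < b := by
    rw [hb, hc]
    exact (div_lt_div_iff_of_pos_right (by linarith)).2 (by linarith)
  have hb4 : b < π / 2 := by
    rw [hb, div_lt_iff₀ (by linarith)]
    have h2n : π * 2 ≤ π * (n:ℝ) := mul_le_mul_of_nonneg_left hN hpi.le
    linarith
  have hpa : 0 < π / 2 - a := by rw [ha]; linarith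
  have hkey1 := tan_key (x := a) ⟨hapos.le, ha4.le⟩
  have hab : a * b = c * (π / 2 - a) := by
    rw [ha, hb, hc]
    ring
  have h1 : c ≤ Real.tan a * b := by
    have h2 := mul_le_mul_of_nonneg_right hkey1 hbpos.le
    rw [hab] at h2
    have h3 : Real.tan a * (π / 2 - a) * b = Real.tan a * b * (π / 2 - a) := by ring
    rw [h3] at h2
    exact le_of_mul_le_mul_right h2 hpa
  have h2 := tan_mul_le hcpos.le hcb.le hb4
  have htb : 0 ≤ Real.tan b := Real.tan_nonneg_of_nonneg_of_le_pi_div_two hbpos.le hb4.le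
  have hmain : Real.tan c ≤ Real.tan a * Real.tan b := by
    have h3 : Real.tan b * c ≤ Real.tan b * (Real.tan a * b) := mul_le_mul_of_nonneg_left h1 htb
    have h4 : Real.tan c * b ≤ Real.tan a * Real.tan b * b := by
      calc Real.tan c * b ≤ Real.tan b * c := h2
        _ ≤ Real.tan b * (Real.tan a * b) := h3
        _ = Real.tan a * Real.tan b * b := by ring
    exact le_of_mul_le_mul_right h4 hbpos
  have hca : 0 < Real.cos a := cos_pos_aux hapos.le (by linarith)
  have hcbp : 0 < Real.cos b := cos_pos_aux hbpos.le hb4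
  have hccp : 0 < Real.cos c := cos_pos_aux hcpos.le (by linarith)
  constructor
  · rw [ge_iff_le, ← sub_nonneg]
    have hid : Real.sin a * Real.sin b * Real.cos c - Real.cos a * Real.cos b * Real.sin c
        = Real.cos a * Real.cos b * Real.cos c * (Real.tan a * Real.tan b - Real.tan c) := by
      rw [Real.tan_eq_sin_div_cos, Real.tan_eq_sin_div_cos, Real.tan_eq_sin_div_cos]
      field_simp
    rw [hid]
    exact mul_nonneg (by positivity) (by linarith)
  · have htc : 0 ≤ Real.tan c :=
      Real.tan_nonneg_of_nonneg_of_le_pi_div_two hcpos.le (by linarith)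
    have hsq := pow_le_pow_left₀ htc hmain 2
    rw [mul_pow] at hsq
    exact hsq
end

section
/- Let 0 < m < M and T a positive integer, with γ_t := (M+m)/2 - ((M-m)/2)·cos((t-1/2)π/T) for t = 1,…,T and θ := (M+m)/(M-m). Then the sum of reciprocal nodes satisfies Σ_{t=1}^T 1/γ_t = (T/√(Mm))·tanh(T·arcosh(θ)), and in particular (1/T)·Σ_{t=1}^T 1/γ_t < 1/√(Mm). -/
open Real Polynomial


lemma deriv_prod_X_sub_C (β : ℕ → ℂ) (s : Finset ℕ) :
    derivative (∏ k ∈ s, (X - C (β k))) = ∑ k ∈ s, ∏ j ∈ s.erase k, (X - C (β j)) := by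
  induction s using Finset.induction_on with
  | empty => simp
  | insert a s ha ih =>
    rw [Finset.prod_insert ha, derivative_mul, derivative_sub, derivative_X, derivative_C,
      sub_zero, one_mul, ih, Finset.sum_insert ha, Finset.erase_insert ha, Finset.mul_sum]
    congr 1
    apply Finset.sum_congr rfl
    intro k hk
    rw [Finset.erase_insert_of_ne (by rintro rfl; exact ha hk),
      Finset.prod_insert (by simp [ha])]


noncomputable def cnode (n k : ℕ) : ℂ := Complex.exp (((2 * k + 1) * π / n : ℝ) * Complex.I)

lemma cnode_pow (n : ℕ) (hn : 0 < n) (k : ℕ) : cnode n k ^ n = -1 := by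
  rw [cnode, ← Complex.exp_nat_mul]
  have hn' : (n : ℂ) ≠ 0 := Nat.cast_ne_zero.2 hn.ne'
  have : (n : ℂ) * ((((2 * k + 1) * π / n : ℝ) : ℂ) * Complex.I)
      = (2*k+1 : ℕ) * (π * Complex.I) := by
    push_cast
    field_simp
  rw [this, Complex.exp_nat_mul, Complex.exp_pi_mul_I]
  exact Odd.neg_one_pow ⟨k, by ring⟩



lemma cnode_inj (n : ℕ) (hn : 0 < n) : Set.InjOn (cnode n) (Finset.range n) := by
  intro j hj k hk h
  simp only [Finset.coe_range, Set.mem_Iio] at hj hk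
  rw [cnode, cnode, Complex.exp_eq_exp_iff_exists_int] at h
  obtain ⟨i, hi⟩ := h
  have him := congrArg Complex.im hi
  simp only [Complex.add_im, Complex.mul_im, Complex.ofReal_re, Complex.I_im, Complex.ofReal_im,
    Complex.I_re, mul_zero, zero_mul, add_zero, mul_one, Complex.mul_re, Complex.intCast_im,
    Complex.intCast_re, Complex.mul_im, zero_add] at him
  -- him : (2*j+1)*π/n = (2*k+1)*π/n + i * (2*π)
  have hπ : (π : ℝ) ≠ 0 := Real.pi_ne_zero
  have hn' : (n : ℝ) ≠ 0 := Nat.cast_ne_zero.2 hn.ne'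
  have key : (2*(j:ℝ)+1) = (2*k+1) + i * (2*n) := by
    field_simp at him
    simp only [Complex.re_ofNat, sub_zero] at him
    apply mul_right_cancel₀ hπ
    linear_combination him
  have : (j : ℝ) - k = i * n := by linarith
  have hint : (j : ℤ) - k = i * n := by exact_mod_cast this
  have : i = 0 := by
    rcases lt_trichotomy i 0 with h0 | h0 | h0
    · nlinarith [hint, (show (j:ℤ) < n by exact_mod_cast hj), (show (0:ℤ) ≤ k by positivity),
        (show (k:ℤ) < n by exact_mod_cast hk), (show (0:ℤ) ≤ j by positivity),
        (show i ≤ -1 by omega)]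
    · exact h0
    · nlinarith [hint, (show (j:ℤ) < n by exact_mod_cast hj), (show (0:ℤ) ≤ k by positivity),
        (show (k:ℤ) < n by exact_mod_cast hk), (show (0:ℤ) ≤ j by positivity),
        (show 1 ≤ i by omega)]
  rw [this] at hint
  simp at hint
  exact_mod_cast (by omega : (j:ℤ) = k)



lemma cnode_prod (n : ℕ) (hn : 0 < n) :
    (∏ k ∈ Finset.range n, (X - C (cnode n k))) = X ^ n + C 1 := by
  have hmonicL : (∏ k ∈ Finset.range n, (X - C (cnode n k))).Monic :=
    monic_prod_of_monic _ _ fun k _ => monic_X_sub_C _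
  have hmonicR : (X ^ n + C (1:ℂ)).Monic := monic_X_pow_add_C _ hn.ne'
  have hdvd : (∏ k ∈ Finset.range n, (X - C (cnode n k))) ∣ X ^ n + C 1 := by
    apply Finset.prod_dvd_of_coprime
    · intro a ha b hb hab
      exact isCoprime_X_sub_C_of_isUnit_sub
        (IsUnit.of_mul_eq_one _ (mul_inv_cancel₀ (sub_ne_zero.2
          (fun h => hab (cnode_inj n hn ha hb h)))))
    · intro k _
      rw [dvd_iff_isRoot]
      simp [IsRoot, cnode_pow n hn k]
  have hdegL : (∏ k ∈ Finset.range n, (X - C (cnode n k))).natDegree = n := by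
    rw [natDegree_prod _ _ (fun k _ => X_sub_C_ne_zero _)]
    simp
  have hdegR : (X ^ n + C (1:ℂ)).natDegree = n := natDegree_X_pow_add_C
  exact eq_of_monic_of_associated hmonicL hmonicR
    (associated_of_dvd_of_natDegree_le hdvd hmonicR.ne_zero (by rw [hdegL, hdegR]))



lemma cnode_sum (n : ℕ) (hn : 0 < n) (q : ℝ) (hq : 1 < q) :
    ∑ k ∈ Finset.range n, cnode n k / ((q:ℂ) - cnode n k) = -(n:ℂ) / ((q:ℂ) ^ n + 1) := by
  have hqn0 : (0:ℝ) < q ^ n + 1 := by positivity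
  have hqnC : ((q:ℂ) ^ n + 1) ≠ 0 := by
    intro h
    have : ((q ^ n + 1 : ℝ) : ℂ) = 0 := by push_cast; linear_combination h
    exact hqn0.ne' (by exact_mod_cast this)
  have hne : ∀ k, (q:ℂ) - cnode n k ≠ 0 := by
    intro k h
    have hk : cnode n k = (q:ℂ) := by linear_combination -h
    have : ((-1 : ℝ) : ℂ) = ((q ^ n : ℝ) : ℂ) := by
      push_cast
      rw [← cnode_pow n hn k, hk]
    have : (-1 : ℝ) = q ^ n := by exact_mod_cast this
    nlinarith [pow_pos (show (0:ℝ) < q by linarith) n]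
  -- evaluation of the product
  have hprodEval : (∏ k ∈ Finset.range n, ((q:ℂ) - cnode n k)) = (q:ℂ) ^ n + 1 := by
    have := congrArg (eval (q:ℂ)) (cnode_prod n hn)
    simpa [eval_prod] using this
  -- evaluation of the derivative
  have hderivEval : (∑ k ∈ Finset.range n, ∏ j ∈ (Finset.range n).erase k,
      ((q:ℂ) - cnode n j)) = (n:ℂ) * (q:ℂ) ^ (n-1) := by
    have h1 := congrArg (eval (q:ℂ)) (congrArg derivative (cnode_prod n hn))
    rw [deriv_prod_X_sub_C] at h1
    simpa [eval_finset_sum, eval_prod, derivative_X_pow] using h1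
  have herase : ∀ k ∈ Finset.range n,
      (∏ j ∈ (Finset.range n).erase k, ((q:ℂ) - cnode n j)) * ((q:ℂ) - cnode n k)
        = (q:ℂ) ^ n + 1 := by
    intro k hk
    rw [Finset.prod_erase_mul _ _ hk, hprodEval]
  have hS : (∑ k ∈ Finset.range n, ((q:ℂ) - cnode n k)⁻¹)
      = (n:ℂ) * (q:ℂ) ^ (n-1) / ((q:ℂ) ^ n + 1) := by
    rw [eq_div_iff hqnC, Finset.sum_mul, ← hderivEval]
    apply Finset.sum_congr rfl
    intro k hk
    rw [← herase k hk, mul_comm]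
    exact mul_inv_cancel_right₀ (hne k) _
  have hsplit : ∀ k, cnode n k / ((q:ℂ) - cnode n k)
      = (q:ℂ) * ((q:ℂ) - cnode n k)⁻¹ - 1 := by
    intro k
    field_simp [hne k]
    ring
  calc ∑ k ∈ Finset.range n, cnode n k / ((q:ℂ) - cnode n k)
      = (q:ℂ) * (∑ k ∈ Finset.range n, ((q:ℂ) - cnode n k)⁻¹) - n := by
        simp [hsplit, Finset.sum_sub_distrib, Finset.mul_sum]
    _ = -(n:ℂ) / ((q:ℂ) ^ n + 1) := by
        rw [hS]
        have hq0 : (q:ℂ) ≠ 0 := by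
          exact_mod_cast (show (q:ℝ) ≠ 0 by positivity)
        have hpow : (q:ℂ) * (q:ℂ) ^ (n-1) = (q:ℂ) ^ n := by
          rw [← pow_succ']
          congr 1
          omega
        have h2 : (q:ℂ) * ((n:ℂ) * (q:ℂ) ^ (n-1) / ((q:ℂ) ^ n + 1))
            = (n:ℂ) * (q:ℂ) ^ n / ((q:ℂ) ^ n + 1) := by
          rw [← hpow]; ring
        rw [h2]
        field_simp
        ring



lemma cnode_pair (T t : ℕ) (hT : 0 < T) (ht1 : 1 ≤ t) (ht2 : t ≤ T) :
    cnode (2*T) (t-1) * cnode (2*T) (2*T - t) = 1 ∧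
    cnode (2*T) (t-1) + cnode (2*T) (2*T - t)
      = ((2 * Real.cos ((2*(t:ℝ)-1)*π/(2*(T:ℝ))) : ℝ) : ℂ) := by
  have hcast1 : ((t - 1 : ℕ) : ℝ) = (t : ℝ) - 1 := by
    rw [Nat.cast_sub ht1]; norm_num
  have hcast2 : ((2*T - t : ℕ) : ℝ) = 2*(T:ℝ) - t := by
    rw [Nat.cast_sub (by omega)]; push_cast; ring
  have hTR : ((T:ℝ)) ≠ 0 := by positivity
  set y : ℝ := (2*(t:ℝ)-1)*π/(2*(T:ℝ)) with hy
  have h1 : cnode (2*T) (t-1) = Complex.exp ((y:ℂ) * Complex.I) := by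
    rw [cnode]
    have h : ((2 * ((t-1:ℕ):ℝ) + 1) * π / ((2*T:ℕ):ℝ) : ℝ) = y := by
      rw [hcast1, hy]
      push_cast
      ring
    rw [h]
  have h2' : cnode (2*T) (2*T - t) = Complex.exp (-(y:ℂ) * Complex.I) := by
    rw [cnode]
    have h : ((2 * ((2*T-t:ℕ):ℝ) + 1) * π / ((2*T:ℕ):ℝ) : ℝ) = 2*π - y := by
      rw [hcast2, hy]
      push_cast
      field_simp
      ring
    rw [h]
    have h3 : ((2*π - y : ℝ) : ℂ) * Complex.I = 2*π*Complex.I + (-(y:ℂ) * Complex.I) := by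
      push_cast
      ring
    rw [h3, Complex.exp_add, Complex.exp_two_pi_mul_I, one_mul]
  constructor
  · rw [h1, h2', ← Complex.exp_add]
    have : (y:ℂ) * Complex.I + -(y:ℂ) * Complex.I = 0 := by ring
    rw [this, Complex.exp_zero]
  · rw [h1, h2', Complex.exp_mul_I, Complex.exp_mul_I]
    rw [Complex.cos_neg, Complex.sin_neg]
    rw [← Complex.ofReal_cos]
    push_cast
    ring



lemma cnode_ne (n : ℕ) (hn : 0 < n) (q : ℝ) (hq : 1 < q) (k : ℕ) :
    (q:ℂ) - cnode n k ≠ 0 := by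
  intro h
  have hk : cnode n k = (q:ℂ) := by linear_combination -h
  have h1 : ((-1 : ℝ) : ℂ) = ((q ^ n : ℝ) : ℂ) := by
    push_cast
    rw [← cnode_pow n hn k, hk]
  have : (-1 : ℝ) = q ^ n := by exact_mod_cast h1
  nlinarith [pow_pos (show (0:ℝ) < q by linarith) n]

lemma main_real (T : ℕ) (hT : 0 < T) (q : ℝ) (hq : 1 < q) :
    ∑ t ∈ Finset.Icc 1 T, (q^2 - 1) / (q^2 - 2*q*Real.cos ((2*(t:ℝ)-1)*π/(2*(T:ℝ))) + 1)
      = T - 2*T/(q^(2*T)+1) := by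
  set n := 2*T with hn
  have hn0 : 0 < n := by omega
  have hne := cnode_ne n hn0 q hq
  -- complex term identity
  have hterm : ∀ t ∈ Finset.Icc 1 T,
      (((q^2 - 1) / (q^2 - 2*q*Real.cos ((2*(t:ℝ)-1)*π/(2*(T:ℝ))) + 1) : ℝ) : ℂ)
        = 1 + cnode n (t-1) / ((q:ℂ) - cnode n (t-1))
            + cnode n (n-t) / ((q:ℂ) - cnode n (n-t)) := by
    intro t ht
    simp only [Finset.mem_Icc] at ht
    obtain ⟨hp, hs⟩ := cnode_pair T t hT ht.1 ht.2
    set α := cnode n (t-1)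
    set β := cnode n (n-t)
    have hd : ((q^2 - 2*q*Real.cos ((2*(t:ℝ)-1)*π/(2*(T:ℝ))) + 1 : ℝ) : ℂ)
        = ((q:ℂ) - α) * ((q:ℂ) - β) := by
      push_cast
      push_cast at hs
      linear_combination (q:ℂ) * hs - hp
    rw [Complex.ofReal_div, hd]
    have hα : (q:ℂ) - α ≠ 0 := hne (t-1)
    have hβ : (q:ℂ) - β ≠ 0 := hne (n-t)
    field_simp
    push_cast
    first
    | linear_combination 2*hp
    | linear_combination -hp
    | linear_combination hp
    | linear_combination -2*hp
    | (ring_nf; first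
        | linear_combination 2*hp
        | linear_combination -hp
        | linear_combination hp
        | linear_combination -2*hp)
  rw [← Complex.ofReal_inj, Complex.ofReal_sum, Finset.sum_congr rfl hterm]
  rw [Finset.sum_add_distrib, Finset.sum_add_distrib]
  have hc : ∑ _t ∈ Finset.Icc 1 T, (1:ℂ) = T := by simp
  have h1 : ∑ t ∈ Finset.Icc 1 T, cnode n (t-1) / ((q:ℂ) - cnode n (t-1))
      = ∑ k ∈ Finset.range T, cnode n k / ((q:ℂ) - cnode n k) := by
    refine Finset.sum_nbij' (fun t => t - 1) (fun k => k + 1) ?_ ?_ ?_ ?_ ?_ <;>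
        intro a ha <;> simp only [Finset.mem_Icc, Finset.mem_range] at ha ⊢ <;>
      first
      | rfl
      | omega
  have h2 : ∑ t ∈ Finset.Icc 1 T, cnode n (n-t) / ((q:ℂ) - cnode n (n-t))
      = ∑ k ∈ Finset.Ico T n, cnode n k / ((q:ℂ) - cnode n k) := by
    refine Finset.sum_nbij' (fun t => n - t) (fun k => n - k) ?_ ?_ ?_ ?_ ?_ <;>
        intro a ha <;> simp only [Finset.mem_Icc, Finset.mem_Ico] at ha ⊢ <;>
      first
      | rfl
      | omega
  have h3 : (∑ k ∈ Finset.range T, cnode n k / ((q:ℂ) - cnode n k))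
      + ∑ k ∈ Finset.Ico T n, cnode n k / ((q:ℂ) - cnode n k)
      = ∑ k ∈ Finset.range n, cnode n k / ((q:ℂ) - cnode n k) := by
    rw [Finset.range_eq_Ico, Finset.range_eq_Ico]
    exact Finset.sum_Ico_consecutive _ (Nat.zero_le T) (by omega)
  rw [hc, h1, h2]
  rw [add_assoc, h3, cnode_sum n hn0 q hq, hn]
  push_cast
  ring


set_option maxHeartbeats 1000000 in
theorem cheb_nodes_reciprocal_sum (m M : ℝ) (hm : 0 < m) (hmM : m < M) (T : ℕ) (hT : 0 < T)
    (γ : ℕ → ℝ) (hγ : ∀ t, γ t = (M + m) / 2 - (M - m) / 2 * Real.cos (((t : ℝ) - 1 / 2) * π / T))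
    (θ : ℝ) (hθ : θ = (M + m) / (M - m)) :
    (∑ t ∈ Finset.Icc 1 T, 1 / γ t) =
      (T : ℝ) / Real.sqrt (M * m) *
        Real.tanh ((T : ℝ) * Real.log (θ + Real.sqrt (θ ^ 2 - 1))) ∧
    (1 / (T : ℝ)) * ∑ t ∈ Finset.Icc 1 T, 1 / γ t < 1 / Real.sqrt (M * m) := by
  have hMm : 0 < M - m := by linarith
  set b : ℝ := (M - m) / 2 with hb
  have hb0 : 0 < b := by positivity
  have hθ1 : 1 < θ := by
    rw [hθ, lt_div_iff₀ hMm]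
    linarith
  set s : ℝ := Real.sqrt (θ ^ 2 - 1) with hs
  have hs2 : s ^ 2 = θ ^ 2 - 1 := Real.sq_sqrt (by nlinarith)
  have hs0 : 0 < s := Real.sqrt_pos.2 (by nlinarith)
  set q : ℝ := θ + s with hqdef
  have hq : 1 < q := by simp only [hqdef]; linarith
  have hq0 : 0 < q := by linarith
  have hqinv : q * (θ - s) = 1 := by
    have : q * (θ - s) = θ^2 - s^2 := by rw [hqdef]; ring
    rw [this, hs2]; ring
  have hq1ne : q^2 - 1 ≠ 0 := by nlinarith
  have hbθ : b * θ = (M + m) / 2 := by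
    rw [hb, hθ]; field_simp
  have hbs : b * s = Real.sqrt (M * m) := by
    have h1 : M * m = (b * s)^2 := by
      have : (b*s)^2 = b^2 * (θ^2 - 1) := by rw [← hs2]; ring
      rw [this]
      have : b^2 * θ^2 = ((M+m)/2)^2 := by rw [← hbθ]; ring
      nlinarith [this]
    rw [h1, Real.sqrt_sq (by positivity)]
  have hq2 : q^2 + 1 = 2*θ*q := by
    have h : q^2 = (θ + s) * q := by rw [hqdef]; ring
    linear_combination h - hqinv
  -- tanh formula
  have hlog : Real.log (θ + Real.sqrt (θ ^ 2 - 1)) = Real.log q := by rw [hqdef, hs]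
  have hexp : Real.exp ((T:ℝ) * Real.log q) = q ^ T := by
    rw [Real.exp_nat_mul, Real.exp_log hq0]
  have hqT : (0:ℝ) < q ^ T := by positivity
  have htanh : Real.tanh ((T:ℝ) * Real.log (θ + Real.sqrt (θ ^ 2 - 1)))
      = (q^(2*T) - 1) / (q^(2*T) + 1) := by
    rw [hlog, Real.tanh_eq_sinh_div_cosh, Real.sinh_eq, Real.cosh_eq, hexp,
      Real.exp_neg, hexp]
    rw [show q^(2*T) = (q^T)^2 by rw [mul_comm 2 T, pow_mul]]
    field_simp
  have hq2T : (0:ℝ) < q^(2*T) + 1 := by positivity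
  -- rewrite each summand
  have hDpos : ∀ t : ℕ, 0 < q^2 - 2*q*Real.cos ((2*(t:ℝ)-1)*π/(2*(T:ℝ))) + 1 := by
    intro t
    nlinarith [Real.cos_le_one ((2*(t:ℝ)-1)*π/(2*(T:ℝ))), Real.neg_one_le_cos ((2*(t:ℝ)-1)*π/(2*(T:ℝ)))]
  have hsummand : ∀ t ∈ Finset.Icc 1 T, 1 / γ t
      = (q^2 - 1) / (q^2 - 2*q*Real.cos ((2*(t:ℝ)-1)*π/(2*(T:ℝ))) + 1) * (2*q/(b*(q^2-1))) := by
    intro t ht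
    have hTne : (T:ℝ) ≠ 0 := Nat.cast_ne_zero.2 hT.ne'
    have hcos : Real.cos (((t:ℝ) - 1/2) * π / T) = Real.cos ((2*(t:ℝ)-1)*π/(2*(T:ℝ))) := by
      congr 1
      field_simp
    have hγt : γ t = b * (θ - Real.cos ((2*(t:ℝ)-1)*π/(2*(T:ℝ)))) := by
      rw [hγ t, hcos, mul_sub, hbθ, hb]
    set c := Real.cos ((2*(t:ℝ)-1)*π/(2*(T:ℝ))) with hc
    have hD := hDpos t
    have hθc : θ - c = (q^2 - 2*q*c + 1) / (2*q) := by
      rw [eq_div_iff (by positivity)]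
      linear_combination -hq2
    have hDc : q ^ 2 - 2*q*c + 1 ≠ 0 := by rw [hc]; exact (hDpos t).ne'
    rw [hγt, hθc]
    field_simp [hb0.ne', hDc, hq1ne, hq0.ne']

  rw [Finset.sum_congr rfl hsummand, ← Finset.sum_mul, main_real T hT q hq]
  have hmain : (↑T - 2*↑T/(q^(2*T)+1)) * (2*q/(b*(q^2-1)))
      = (T : ℝ) / Real.sqrt (M * m) *
        Real.tanh ((T : ℝ) * Real.log (θ + Real.sqrt (θ ^ 2 - 1))) := by
    rw [htanh, ← hbs]
    have hq2' : q^2 - 1 = 2*s*q := by linear_combination q*hqdef + hqinv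
    rw [hq2']
    field_simp
    ring
  rw [hmain]
  refine ⟨rfl, ?_⟩
  have hsqrt : 0 < Real.sqrt (M*m) := by rw [← hbs]; positivity
  have htanh1 : Real.tanh ((T : ℝ) * Real.log (θ + Real.sqrt (θ ^ 2 - 1))) < 1 := by
    rw [Real.tanh_eq_sinh_div_cosh, div_lt_one (Real.cosh_pos _)]
    exact Real.sinh_lt_cosh _
  have hTne : (T:ℝ) ≠ 0 := Nat.cast_ne_zero.2 hT.ne'
  have hfin : ∀ x : ℝ, (1/(T:ℝ)) * ((T:ℝ)/Real.sqrt (M*m) * x)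
      = x / Real.sqrt (M*m) := by
    intro x
    rw [show (1/(T:ℝ)) * ((T:ℝ)/Real.sqrt (M*m) * x)
        = (1/(T:ℝ)*(T:ℝ)) * (x/Real.sqrt (M*m)) from by ring,
      one_div_mul_cancel hTne, one_mul]
  rw [hfin, div_lt_div_iff₀ hsqrt hsqrt]
  nlinarith [htanh1, hsqrt]
end

section
/- Let θ ≥ 1 and let c ≥ 1 be an integer. Then 2/(1 + T_{2^c}(θ)) ≤ Π_{i=0}^{c-1} 2/(1 + T_{2^i}(θ)). -/
open Real

lemma one_le_cheb (θ : ℝ) (hθ : 1 ≤ θ) : ∀ n : ℕ, 1 ≤ cheb n θ ∧ cheb n θ ≤ cheb (n + 1) θ := by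
  intro n
  induction n with
  | zero =>
    simp [cheb, Polynomial.Chebyshev.T_zero, Polynomial.Chebyshev.T_one, hθ]
  | succ n ih =>
    obtain ⟨h1, h2⟩ := ih
    have h1' : 1 ≤ cheb (n + 1) θ := le_trans h1 h2
    refine ⟨h1', ?_⟩
    have hrec : cheb (n + 2) θ = 2 * θ * cheb (n + 1) θ - cheb n θ := by
      have := Polynomial.Chebyshev.T_add_two ℝ (n : ℤ)
      have := congrArg (Polynomial.eval θ) this
      simp only [cheb] at *
      push_cast
      simpa using this
    have : cheb (n + 1) θ ≤ 2 * cheb (n + 1) θ - cheb n θ := by nlinarith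
    calc cheb (n + 1) θ ≤ 2 * cheb (n + 1) θ - cheb n θ := this
      _ ≤ 2 * θ * cheb (n + 1) θ - cheb n θ := by nlinarith
      _ = cheb (n + 2) θ := hrec.symm

lemma cheb_half (θ : ℝ) (n : ℕ) : 1 + cheb (2 * n) θ = 2 * (cheb n θ) ^ 2 := by
  have := Polynomial.Chebyshev.T_mul_T ℝ (n : ℤ) (n : ℤ)
  have := congrArg (Polynomial.eval θ) this
  simp only [cheb]
  push_cast
  simp only [Polynomial.eval_mul, Polynomial.eval_add, Polynomial.eval_ofNat, sub_self,
    Polynomial.Chebyshev.T_zero, Polynomial.eval_one] at this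
  rw [two_mul (n : ℤ)]
  nlinarith [this]

theorem cheb_pow_two_bound_prod (θ : ℝ) (hθ : 1 ≤ θ) (c : ℕ) (hc : 1 ≤ c) :
    2 / (1 + cheb (2 ^ c) θ) ≤ ∏ i ∈ Finset.range c, 2 / (1 + cheb (2 ^ i) θ) := by
  induction c, hc using Nat.le_induction with
  | base =>
    have h2 : 1 + cheb (2 ^ 1) θ = 2 * (cheb 1 θ) ^ 2 := by
      simpa using cheb_half θ 1
    have h1 : cheb 1 θ = θ := by
      simp [cheb, Polynomial.Chebyshev.T_one]
    simp only [Finset.prod_range_one, pow_one, pow_zero] at *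
    rw [h2, h1]
    rw [div_le_div_iff₀ (by positivity) (by nlinarith)]
    nlinarith
  | succ c hc ih =>
    have ha : 1 ≤ cheb (2 ^ c) θ := (one_le_cheb θ hθ _).1
    set a := cheb (2 ^ c) θ with haa
    have hh : 1 + cheb (2 ^ (c + 1)) θ = 2 * a ^ 2 := by
      rw [pow_succ, mul_comm]
      exact cheb_half θ (2 ^ c)
    rw [Finset.prod_range_succ, hh]
    have key : 2 / (2 * a ^ 2) ≤ (2 / (1 + a)) * (2 / (1 + a)) := by
      rw [div_mul_div_comm, div_le_div_iff₀ (by positivity) (by nlinarith)]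
      nlinarith
    calc 2 / (2 * a ^ 2) ≤ (2 / (1 + a)) * (2 / (1 + a)) := key
      _ ≤ (∏ i ∈ Finset.range c, 2 / (1 + cheb (2 ^ i) θ)) * (2 / (1 + a)) := by
          apply mul_le_mul_of_nonneg_right (by rw [haa] ; exact ih) (by positivity)
end

section
/- Let η⁺, η⁻ > 0 with η⁺ ≥ 10·η⁻, let n be a positive integer with n ≤ 0.1·η⁺/η⁻, and define the polynomial p(λ) := (1 - η⁺λ)(1 - η⁻λ)^n. Then at the critical point λ* := (η⁺ + n·η⁻)/((n+1)·η⁺·η⁻), one has |p(λ*)| > 1.34; consequently, for any interval [a,b] containing λ*, the sup-norm of p^m on [a,b] exceeds 1.34^m for every positive integer m. -/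
open Real

lemma spiky_aux_pow (n : ℕ) (hn : 0 < n) :
    (0.134 : ℝ) < (((n : ℝ) - 0.1) / ((n : ℝ) + 1)) ^ (n + 1) := by
  rcases le_or_gt n 4 with h4 | h5
  · interval_cases n <;> norm_num
  · have hn5 : (5 : ℝ) ≤ (n : ℝ) := by exact_mod_cast h5
    have hden : (0 : ℝ) < (n : ℝ) - 0.1 := by linarith
    have hnum : (0 : ℝ) < (n : ℝ) + 1 := by linarith
    set d : ℝ := ((n : ℝ) + 1) / ((n : ℝ) - 0.1) with hdDef
    have hd0 : 0 < d := by positivity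
    set t : ℝ := 1.1 / ((n : ℝ) - 0.1) with htDef
    have ht0 : 0 ≤ t := by positivity
    have hdt : d = 1 + t := by
      rw [hdDef, htDef]; field_simp; ring
    have h1 : d ≤ Real.exp t := by
      rw [hdt]; linarith [Real.add_one_le_exp t]
    have hpow : d ^ (n + 1) ≤ Real.exp t ^ (n + 1) :=
      pow_le_pow_left₀ hd0.le h1 _
    have hexp : Real.exp t ^ (n + 1) = Real.exp (((n : ℝ) + 1) * t) := by
      rw [← Real.exp_nat_mul]
      push_cast
      ring_nf
    have htb : ((n : ℝ) + 1) * t ≤ 66 / 49 := by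
      rw [htDef, mul_div_assoc']
      rw [div_le_iff₀ hden]
      nlinarith
    have hexp2 : Real.exp (((n : ℝ) + 1) * t) ≤ Real.exp (66 / 49) :=
      Real.exp_le_exp.mpr htb
    have e1 : (27 / 49 : ℝ) ≤ Real.exp (-(22 / 49)) := by
      have := Real.add_one_le_exp (-(22 / 49) : ℝ); linarith
    have e2 : Real.exp (22 / 49) ≤ 49 / 27 := by
      have h := Real.exp_neg (22 / 49 : ℝ)
      have hpos : (0 : ℝ) < 27 / 49 := by norm_num
      have : Real.exp (-(22 / 49)) = (Real.exp (22 / 49))⁻¹ := h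
      rw [this] at e1
      have h2 : Real.exp (22 / 49) ≤ (27 / 49 : ℝ)⁻¹ := by
        rw [← inv_inv (Real.exp (22 / 49))]
        exact inv_anti₀ hpos e1
      simpa using h2
    have e3 : Real.exp (66 / 49) ≤ (49 / 27 : ℝ) ^ 3 := by
      have : Real.exp (66 / 49 : ℝ) = Real.exp (22 / 49) ^ (3 : ℕ) := by
        rw [← Real.exp_nat_mul]; norm_num
      rw [this]
      exact pow_le_pow_left₀ (Real.exp_pos _).le e2 3
    have hdbound : d ^ (n + 1) < 500 / 67 := by
      have : (49 / 27 : ℝ) ^ 3 < 500 / 67 := by norm_num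
      calc d ^ (n + 1) ≤ Real.exp t ^ (n + 1) := hpow
        _ = Real.exp (((n : ℝ) + 1) * t) := hexp
        _ ≤ Real.exp (66 / 49) := hexp2
        _ ≤ (49 / 27 : ℝ) ^ 3 := e3
        _ < 500 / 67 := this
    have hcd : (((n : ℝ) - 0.1) / ((n : ℝ) + 1)) = d⁻¹ := by
      rw [hdDef]; field_simp
    rw [hcd, inv_pow]
    have hdpow : 0 < d ^ (n + 1) := pow_pos hd0 _
    have : (500 / 67 : ℝ)⁻¹ < (d ^ (n + 1))⁻¹ :=
      inv_strictAnti₀ hdpow hdbound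
    calc (0.134 : ℝ) = (500 / 67 : ℝ)⁻¹ := by norm_num
      _ < (d ^ (n + 1))⁻¹ := this

theorem spiky_schedule_unstable (ηp ηm : ℝ) (hηm : 0 < ηm) (hηp : 0 < ηp)
    (hratio : ηp ≥ 10 * ηm) (n : ℕ) (hn : 0 < n) (hsmall : (n : ℝ) ≤ 0.1 * ηp / ηm)
    (p : ℝ → ℝ) (hp : ∀ lam, p lam = (1 - ηp * lam) * (1 - ηm * lam) ^ n)
    (lamStar : ℝ) (hlam : lamStar = (ηp + n * ηm) / ((n + 1) * ηp * ηm)) :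
    |p lamStar| > 1.34 ∧
      ∀ a b : ℝ, a ≤ lamStar → lamStar ≤ b → ∀ m : ℕ, 0 < m →
        (1.34 : ℝ) ^ m < sSup ((fun lam => |p lam ^ m|) '' Set.Icc a b) := by
  have hnp1 : (0 : ℝ) < (n : ℝ) + 1 := by positivity
  have hn1 : (1 : ℝ) ≤ (n : ℝ) := by exact_mod_cast hn
  have hkey : 10 * (n : ℝ) * ηm ≤ ηp := by
    have h := (le_div_iff₀ hηm).mp hsmall
    linarith
  have hpm : ηm < ηp := by linarith
  set E1 : ℝ := (ηp - ηm) / (((n : ℝ) + 1) * ηm) with hE1def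
  set E2 : ℝ := (n : ℝ) * (ηp - ηm) / (((n : ℝ) + 1) * ηp) with hE2def
  set c : ℝ := ((n : ℝ) - 0.1) / ((n : ℝ) + 1) with hcdef
  have hE1pos : 0 ≤ E1 := by
    apply div_nonneg <;> nlinarith
  have hE2pos : 0 ≤ E2 := by
    apply div_nonneg <;> nlinarith
  have hcn : 0 ≤ c := by
    apply div_nonneg <;> linarith
  have h1 : 1 - ηp * lamStar = -E1 := by
    rw [hlam, hE1def]
    field_simp
    ring
  have h2 : 1 - ηm * lamStar = E2 := by
    rw [hlam, hE2def]
    field_simp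
    ring
  have habs : |p lamStar| = E1 * E2 ^ n := by
    rw [hp, h1, h2, abs_mul, abs_neg, abs_pow,
      abs_of_nonneg hE1pos, abs_of_nonneg hE2pos]
  have hcE2 : c ≤ E2 := by
    rw [hcdef, hE2def, div_le_div_iff₀ hnp1 (by positivity)]
    nlinarith
  have hcE1 : 10 * c ≤ E1 := by
    rw [hcdef, hE1def, mul_div_assoc', div_le_div_iff₀ hnp1 (by positivity)]
    nlinarith
  have hlow : 10 * c ^ (n + 1) ≤ E1 * E2 ^ n := by
    have hpw : c ^ n ≤ E2 ^ n := pow_le_pow_left₀ hcn hcE2 n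
    calc 10 * c ^ (n + 1) = (10 * c) * c ^ n := by ring
      _ ≤ E1 * E2 ^ n := mul_le_mul hcE1 hpw (pow_nonneg hcn n) hE1pos
  have haux := spiky_aux_pow n hn
  have hfirst : |p lamStar| > 1.34 := by
    rw [habs]
    rw [hcdef] at hlow
    linarith
  refine ⟨hfirst, ?_⟩
  intro a b ha hb m hm
  have hpe : p = fun lam => (1 - ηp * lam) * (1 - ηm * lam) ^ n := funext hp
  have hpc : Continuous fun lam => |p lam ^ m| := by
    rw [hpe]
    fun_prop
  have hbdd : BddAbove ((fun lam => |p lam ^ m|) '' Set.Icc a b) :=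
    (isCompact_Icc.image hpc).bddAbove
  have hmem : |p lamStar ^ m| ∈ (fun lam => |p lam ^ m|) '' Set.Icc a b :=
    ⟨lamStar, ⟨ha, hb⟩, rfl⟩
  have hle := le_csSup hbdd hmem
  have hlt : (1.34 : ℝ) ^ m < |p lamStar ^ m| := by
    rw [abs_pow]
    exact pow_lt_pow_left₀ hfirst (by norm_num) hm.ne'
  linarith
end

section
/- Let A be a symmetric positive definite d×d matrix with smallest eigenvalue λ_min and largest eigenvalue λ_max, let m, M satisfy 0 < λ_min ≤ m ≤ λ_max ≤ M with m < M, set θ := (M+m)/(M-m) and z_max := (M+m-2λ_min)/(M-m). Then for every positive integer T, T_T(z_max)/T_T(θ) ≤ 2·(1 - φ)^T, where φ := 2·(λ_min + √(Mm) - √((M-λ_min)(m-λ_min)))/((√M + √m)²). -/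
open Real

open Polynomial.Chebyshev in
lemma cheb_cosh (n : ℕ) (t : ℝ) :
    cheb n (Real.cosh t) = Real.cosh (n * t) := by
  have h := T_complex_cos (t * Complex.I) n
  rw [Complex.cos_mul_I] at h
  have h2 : (((n:ℤ) : ℂ)) * ((t:ℂ) * Complex.I) = (((n:ℝ)*t : ℝ):ℂ) * Complex.I := by
    push_cast; ring
  rw [h2, Complex.cos_mul_I] at h
  have hmap : (T ℂ (n : ℤ)) = (T ℝ (n : ℤ)).map (algebraMap ℝ ℂ) := (map_T _ _).symm
  rw [hmap] at h
  have e : Polynomial.eval ((Real.cosh t : ℝ) : ℂ) ((T ℝ (n:ℤ)).map (algebraMap ℝ ℂ))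
      = algebraMap ℝ ℂ (Polynomial.eval (Real.cosh t) (T ℝ (n:ℤ))) := by
    rw [Polynomial.eval_map]; exact Polynomial.eval₂_at_apply _ _
  rw [← Complex.ofReal_cosh, e, ← Complex.ofReal_cosh] at h
  rw [Complex.coe_algebraMap] at h
  exact_mod_cast h

lemma cheb_eval_ge_one (n : ℕ) (x : ℝ) (hx : 1 ≤ x) :
    cheb n x = ((x + Real.sqrt (x^2-1))^n + ((x + Real.sqrt (x^2-1))⁻¹)^n) / 2 := by
  set s := Real.sqrt (x^2-1) with hsdef
  have hx2 : 0 ≤ x^2 - 1 := by nlinarith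
  have hs : s^2 = x^2-1 := Real.sq_sqrt hx2
  have hs0 : 0 ≤ s := Real.sqrt_nonneg _
  have hy : 0 < x + s := by nlinarith
  have hinv : (x+s)⁻¹ = x - s := inv_eq_of_mul_eq_one_right (by nlinarith)
  have hcosh : Real.cosh (Real.log (x+s)) = x := by
    rw [Real.cosh_eq, Real.exp_log hy, Real.exp_neg, Real.exp_log hy, hinv]; ring
  have h := cheb_cosh n (Real.log (x+s))
  rw [hcosh, Real.cosh_eq, show -((n:ℝ) * Real.log (x+s)) = (n:ℝ) * (-Real.log (x+s)) by ring,
    Real.exp_nat_mul, Real.exp_nat_mul, Real.exp_neg, Real.exp_log hy] at h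
  -- h : cheb n x = ((x+s)^n + ((x+s)⁻¹)^n)/2 hopefully
  exact h

set_option maxHeartbeats 1000000 in
theorem partial_acceleration (d : ℕ) (hd : 0 < d) (A : Matrix (Fin d) (Fin d) ℝ)
    (hA : A.IsHermitian) (hApd : A.PosDef)
    (lamMin lamMax : ℝ)
    (hmin : lamMin = ⨅ i, hA.eigenvalues i) (hmax : lamMax = ⨆ i, hA.eigenvalues i)
    (m M : ℝ) (h0 : 0 < lamMin) (h1 : lamMin ≤ m) (h2 : m ≤ lamMax) (h3 : lamMax ≤ M)
    (hmM : m < M)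
    (θ zmax : ℝ) (hθ : θ = (M + m) / (M - m)) (hz : zmax = (M + m - 2 * lamMin) / (M - m))
    (φ : ℝ)
    (hφ : φ = 2 * (lamMin + Real.sqrt (M * m) -
        Real.sqrt ((M - lamMin) * (m - lamMin))) / (Real.sqrt M + Real.sqrt m) ^ 2)
    (T : ℕ) (hT : 0 < T) :
    cheb T zmax / cheb T θ ≤ 2 * (1 - φ) ^ T := by
  have hMm : 0 < M - m := by linarith
  have hm0 : 0 < m := lt_of_lt_of_le h0 h1
  have hM0 : 0 < M := lt_trans hm0 hmM
  set l := lamMin with hl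
  have hz1 : 1 ≤ zmax := by
    rw [hz, le_div_iff₀ hMm]; linarith
  have hzθ : zmax ≤ θ := by
    rw [hz, hθ, div_le_div_iff₀ hMm hMm]; nlinarith
  have hθ1 : 1 ≤ θ := le_trans hz1 hzθ
  set sl := Real.sqrt ((M - l) * (m - l)) with hsl
  set sm := Real.sqrt (M * m) with hsm
  have hsl0 : 0 ≤ sl := Real.sqrt_nonneg _
  have hsm0 : 0 ≤ sm := Real.sqrt_nonneg _
  have hsl2 : sl^2 = (M - l) * (m - l) :=
    Real.sq_sqrt (mul_nonneg (by linarith) (by linarith))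
  have hsm2 : sm^2 = M * m := Real.sq_sqrt (by positivity)
  have hsz : Real.sqrt (zmax^2 - 1) = 2 * sl / (M - m) := by
    have he : zmax^2 - 1 = (2 * sl / (M - m))^2 := by
      have e1 : (2 * sl / (M - m))^2 = 4*((M - l)*(m - l))/(M - m)^2 := by
        rw [div_pow, mul_pow, hsl2]; norm_num
      rw [hz, e1]; field_simp; ring
    rw [he, Real.sqrt_sq (by positivity)]
  have hsθ : Real.sqrt (θ^2 - 1) = 2 * sm / (M - m) := by
    have he : θ^2 - 1 = (2 * sm / (M - m))^2 := by
      have e1 : (2 * sm / (M - m))^2 = 4*(M*m)/(M - m)^2 := by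
        rw [div_pow, mul_pow, hsm2]; norm_num
      rw [hθ, e1]; field_simp; ring
    rw [he, Real.sqrt_sq (by positivity)]
  set u := zmax + Real.sqrt (zmax^2 - 1) with hu
  set v := θ + Real.sqrt (θ^2 - 1) with hv
  have hu1 : 1 ≤ u := le_add_of_le_of_nonneg hz1 (Real.sqrt_nonneg _)
  have hv1 : 1 ≤ v := le_add_of_le_of_nonneg hθ1 (Real.sqrt_nonneg _)
  have hu0 : 0 < u := by linarith
  have hv0 : 0 < v := by linarith
  have hz2 : zmax^2 ≤ θ^2 := pow_le_pow_left₀ (by linarith) hzθ 2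
  have huv : u ≤ v := add_le_add hzθ (Real.sqrt_le_sqrt (by linarith))
  have hsqsum : (Real.sqrt M + Real.sqrt m)^2 = M + m + 2 * sm := by
    rw [add_sq, Real.sq_sqrt hM0.le, Real.sq_sqrt hm0.le, hsm, Real.sqrt_mul hM0.le]
    ring
  have hden0 : 0 < M + m + 2 * sm := by linarith
  have hratio : u / v = 1 - φ := by
    rw [hu, hv, hsz, hsθ, hφ, hsqsum, hz, hθ]
    field_simp
    ring
  -- evaluate chebyshev
  rw [cheb_eval_ge_one T zmax hz1, cheb_eval_ge_one T θ hθ1, ← hu, ← hv, ← hratio]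
  have hut : 0 < u^T := by positivity
  have hvt : 0 < v^T := by positivity
  have huit : (u⁻¹)^T ≤ u^T := pow_le_pow_left₀ (by positivity) (by
    calc u⁻¹ ≤ 1 := inv_le_one_of_one_le₀ hu1
    _ ≤ u := hu1) T
  have hvit : 0 ≤ (v⁻¹)^T := by positivity
  have hbpos : (0:ℝ) < v^T + (v⁻¹)^T := by positivity
  have hL : ((u^T + (u⁻¹)^T)/2)/((v^T + (v⁻¹)^T)/2) = (u^T + (u⁻¹)^T)/(v^T + (v⁻¹)^T) := by
    field_simp
  rw [hL, div_pow, show 2 * (u^T / v^T) = (2 * u^T) / v^T by ring,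
    div_le_div_iff₀ hbpos hvt]
  have k1 : (u⁻¹)^T * v^T ≤ u^T * v^T := mul_le_mul_of_nonneg_right huit hvt.le
  have k2 : 0 ≤ u^T * (v⁻¹)^T := mul_nonneg hut.le hvit
  calc (u^T + (u⁻¹)^T) * v^T = u^T * v^T + (u⁻¹)^T * v^T := by ring
    _ ≤ u^T * v^T + u^T * v^T := by linarith
    _ = 2 * u^T * v^T + 2 * (u^T * (v⁻¹)^T) - 2 * (u^T * (v⁻¹)^T) := by ring
    _ ≤ 2 * u^T * (v^T + (v⁻¹)^T) := by linarith
end
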